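/- For i = 1,2, let q_i(x,ξ) = (1/2) c_i(x) ξ² + 2 ∫_{(0,∞)} (1 − cos(ξ y)) ν_i(x,dy) be one-dimensional symmetric symbols (so c_i : ℝ → [0,∞) with sup_x c_i(x) < ∞, and ν_i kernels of Borel measures on (0,∞) with sup_x ∫ min{1,y²} ν_i(x,dy) < ∞). Assume there is a kernel ρ of Borel measures on (0,∞) such that ν_1(x,B) ≤ ν_2(x,B) + ρ(x,B) and ν_2(x,B) ≤ ν_1(x,B) + ρ(x,B) for all x ∈ ℝ and Borel B ⊆ (0,∞), and sup_{x∈ℝ} ∫_{(0,∞)} y² ρ(x,dy) < ∞. If lim_{ξ→0} inf_{x∈ℝ} q_1(x,ξ)/ξ² = ∞ and ∫_{{|ξ|<r}} dξ / inf_{x∈ℝ} q_1(x,ξ) < ∞ for some r > 0, then lim_{ξ→0} inf_{x∈ℝ} q_2(x,ξ)/ξ² = ∞ and ∫_{{|ξ|<r}} dξ / inf_{x∈ℝ} q_2(x,ξ) < ∞ for some r > 0. -/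

import Mathlib

open MeasureTheory Filter Topology
open scoped ENNReal

/-- A one-dimensional symmetric symbol:
`q(x,ξ) = (1/2)c(x)ξ² + 2∫_{(0,∞)} (1 − cos(ξy)) ν(x,dy)`, valued in `[0,∞]`. -/
noncomputable def oneDimSymbol (c : ℝ → ℝ) (ν : ℝ → MeasureTheory.Measure ℝ)
    (x ξ : ℝ) : ℝ≥0∞ :=
  ENNReal.ofReal ((1 / 2) * c x * ξ ^ 2) +
    2 * ∫⁻ y in Set.Ioi (0 : ℝ), ENNReal.ofReal (1 - Real.cos (ξ * y)) ∂(ν x)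

/-- `1 - cos(ξ y) ≤ (ξ²/2) y²`, in `ℝ≥0∞`. -/
lemma one_sub_cos_le_ennreal (ξ y : ℝ) :
    ENNReal.ofReal (1 - Real.cos (ξ * y)) ≤
      ENNReal.ofReal (ξ ^ 2 / 2) * ENNReal.ofReal (y ^ 2) := by
  rw [← ENNReal.ofReal_mul (by positivity)]
  apply ENNReal.ofReal_le_ofReal
  have h := Real.one_sub_sq_div_two_le_cos (x := ξ * y)
  nlinarith [mul_pow ξ y 2]

/-- perturbations of the Lévy kernel with uniformly bounded second moment
do not affect the Chung–Fuchs transience condition (3.2)+(1.4). -/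
theorem stmt11 (c₁ c₂ : ℝ → ℝ) (ν₁ ν₂ ρ : ℝ → MeasureTheory.Measure ℝ)
    (hc₁ : ∀ x, 0 ≤ c₁ x) (hc₂ : ∀ x, 0 ≤ c₂ x)
    (hc₁b : ∃ K : ℝ, ∀ x, c₁ x ≤ K) (hc₂b : ∃ K : ℝ, ∀ x, c₂ x ≤ K)
    (hν₁ : (⨆ x, ∫⁻ y in Set.Ioi (0 : ℝ), ENNReal.ofReal (min 1 (y ^ 2)) ∂(ν₁ x)) < ∞)
    (hν₂ : (⨆ x, ∫⁻ y in Set.Ioi (0 : ℝ), ENNReal.ofReal (min 1 (y ^ 2)) ∂(ν₂ x)) < ∞)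
    (hdom₁ : ∀ x, ∀ B : Set ℝ, MeasurableSet B → B ⊆ Set.Ioi (0 : ℝ) →
      ν₁ x B ≤ ν₂ x B + ρ x B)
    (hdom₂ : ∀ x, ∀ B : Set ℝ, MeasurableSet B → B ⊆ Set.Ioi (0 : ℝ) →
      ν₂ x B ≤ ν₁ x B + ρ x B)
    (hρ : (⨆ x, ∫⁻ y in Set.Ioi (0 : ℝ), ENNReal.ofReal (y ^ 2) ∂(ρ x)) < ∞)
    (hm₁ : Measurable fun ξ : ℝ => ⨅ x, oneDimSymbol c₁ ν₁ x ξ)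
    (hm₂ : Measurable fun ξ : ℝ => ⨅ x, oneDimSymbol c₂ ν₂ x ξ)
    (hlim₁ : Tendsto (fun ξ : ℝ => (⨅ x, oneDimSymbol c₁ ν₁ x ξ) / ENNReal.ofReal (ξ ^ 2))
      (𝓝[≠] (0 : ℝ)) (𝓝 ∞))
    (hCF₁ : ∃ r > (0 : ℝ), ∫⁻ ξ in Metric.ball (0 : ℝ) r,
      (⨅ x, oneDimSymbol c₁ ν₁ x ξ)⁻¹ < ∞) :
    Tendsto (fun ξ : ℝ => (⨅ x, oneDimSymbol c₂ ν₂ x ξ) / ENNReal.ofReal (ξ ^ 2))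
      (𝓝[≠] (0 : ℝ)) (𝓝 ∞) ∧
    ∃ r > (0 : ℝ), ∫⁻ ξ in Metric.ball (0 : ℝ) r,
      (⨅ x, oneDimSymbol c₂ ν₂ x ξ)⁻¹ < ∞ := by
  classical
  obtain ⟨K₁, hK₁⟩ := hc₁b
  have hK₁0 : 0 ≤ K₁ := le_trans (hc₁ 0) (hK₁ 0)
  set M : ℝ≥0∞ := ⨆ x, ∫⁻ y in Set.Ioi (0 : ℝ), ENNReal.ofReal (y ^ 2) ∂(ρ x) with hMdef
  set C : ℝ≥0∞ := ENNReal.ofReal (K₁ / 2) + M with hCdef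
  have hCne : C ≠ ∞ := by
    rw [hCdef]
    exact ENNReal.add_ne_top.mpr ⟨ENNReal.ofReal_ne_top, hρ.ne⟩
  -- measure domination after restriction
  have hmeasle : ∀ x, (ν₁ x).restrict (Set.Ioi 0) ≤
      (ν₂ x).restrict (Set.Ioi 0) + (ρ x).restrict (Set.Ioi 0) := by
    intro x
    refine Measure.le_intro fun s hs _ => ?_
    rw [Measure.add_apply, Measure.restrict_apply hs, Measure.restrict_apply hs,
      Measure.restrict_apply hs]
    exact hdom₁ x _ (hs.inter measurableSet_Ioi) Set.inter_subset_right
  -- key pointwise estimate: q₁ ≤ q₂ + C ξ²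
  have key : ∀ x ξ, oneDimSymbol c₁ ν₁ x ξ ≤
      oneDimSymbol c₂ ν₂ x ξ + C * ENNReal.ofReal (ξ ^ 2) := by
    intro x ξ
    set d : ℝ≥0∞ := ENNReal.ofReal (ξ ^ 2) with hd
    set I₂ : ℝ≥0∞ :=
      ∫⁻ y in Set.Ioi (0 : ℝ), ENNReal.ofReal (1 - Real.cos (ξ * y)) ∂(ν₂ x) with hI₂
    have hν : (∫⁻ y in Set.Ioi (0 : ℝ), ENNReal.ofReal (1 - Real.cos (ξ * y)) ∂(ν₁ x)) ≤
        I₂ + ∫⁻ y in Set.Ioi (0 : ℝ), ENNReal.ofReal (1 - Real.cos (ξ * y)) ∂(ρ x) := by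
      rw [hI₂, ← lintegral_add_measure]
      exact lintegral_mono' (hmeasle x) le_rfl
    have hρint : (∫⁻ y in Set.Ioi (0 : ℝ), ENNReal.ofReal (1 - Real.cos (ξ * y)) ∂(ρ x)) ≤
        ENNReal.ofReal (ξ ^ 2 / 2) * M := by
      calc (∫⁻ y in Set.Ioi (0 : ℝ), ENNReal.ofReal (1 - Real.cos (ξ * y)) ∂(ρ x))
          ≤ ∫⁻ y in Set.Ioi (0 : ℝ),
              ENNReal.ofReal (ξ ^ 2 / 2) * ENNReal.ofReal (y ^ 2) ∂(ρ x) :=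
            lintegral_mono fun y => one_sub_cos_le_ennreal ξ y
        _ = ENNReal.ofReal (ξ ^ 2 / 2) *
              ∫⁻ y in Set.Ioi (0 : ℝ), ENNReal.ofReal (y ^ 2) ∂(ρ x) :=
            lintegral_const_mul' _ _ ENNReal.ofReal_ne_top
        _ ≤ ENNReal.ofReal (ξ ^ 2 / 2) * M := by
            exact mul_le_mul_right
              (le_iSup (fun x => ∫⁻ y in Set.Ioi (0 : ℝ), ENNReal.ofReal (y ^ 2) ∂(ρ x)) x) _
    have hA : ENNReal.ofReal ((1 / 2) * c₁ x * ξ ^ 2) ≤ ENNReal.ofReal (K₁ / 2) * d := by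
      rw [hd, ← ENNReal.ofReal_mul (by positivity)]
      apply ENNReal.ofReal_le_ofReal
      have := hK₁ x
      nlinarith [sq_nonneg ξ]
    have h2 : (2 : ℝ≥0∞) * ENNReal.ofReal (ξ ^ 2 / 2) = d := by
      rw [hd, show (ξ ^ 2 : ℝ) = 2 * (ξ ^ 2 / 2) by ring, ENNReal.ofReal_mul (by norm_num)]
      norm_num
    calc oneDimSymbol c₁ ν₁ x ξ
        ≤ ENNReal.ofReal (K₁ / 2) * d +
            2 * (I₂ + ENNReal.ofReal (ξ ^ 2 / 2) * M) := by
          unfold oneDimSymbol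
          exact add_le_add hA (mul_le_mul_right (hν.trans (add_le_add_right hρint _)) 2)
      _ = 2 * I₂ + (ENNReal.ofReal (K₁ / 2) * d + M * d) := by
          rw [mul_add, ← mul_assoc, h2]; ring
      _ ≤ oneDimSymbol c₂ ν₂ x ξ + C * d := by
          unfold oneDimSymbol
          rw [hCdef, add_mul]
          exact add_le_add le_add_self le_rfl
  -- inequality between the infima
  have hinf : ∀ ξ : ℝ, (⨅ x, oneDimSymbol c₁ ν₁ x ξ) ≤
      (⨅ x, oneDimSymbol c₂ ν₂ x ξ) + C * ENNReal.ofReal (ξ ^ 2) := by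
    intro ξ
    rw [ENNReal.iInf_add]
    exact le_iInf fun x => (iInf_le _ x).trans (key x ξ)
  -- basic facts about d = ofReal ξ² for ξ ≠ 0
  have hd0 : ∀ ξ : ℝ, ξ ≠ 0 → ENNReal.ofReal (ξ ^ 2) ≠ 0 := by
    intro ξ hξ
    simp only [ne_eq, ENNReal.ofReal_eq_zero, not_le]
    positivity
  have hdt : ∀ ξ : ℝ, ENNReal.ofReal (ξ ^ 2) ≠ ∞ := fun ξ => ENNReal.ofReal_ne_top
  -- division form of the infimum inequality
  have hinfdiv : ∀ ξ : ℝ, ξ ≠ 0 →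
      (⨅ x, oneDimSymbol c₁ ν₁ x ξ) / ENNReal.ofReal (ξ ^ 2) ≤
      (⨅ x, oneDimSymbol c₂ ν₂ x ξ) / ENNReal.ofReal (ξ ^ 2) + C := by
    intro ξ hξ
    calc (⨅ x, oneDimSymbol c₁ ν₁ x ξ) / ENNReal.ofReal (ξ ^ 2)
        ≤ ((⨅ x, oneDimSymbol c₂ ν₂ x ξ) + C * ENNReal.ofReal (ξ ^ 2)) /
            ENNReal.ofReal (ξ ^ 2) :=
          ENNReal.div_le_div_right (hinf ξ) _
      _ = (⨅ x, oneDimSymbol c₂ ν₂ x ξ) / ENNReal.ofReal (ξ ^ 2) + C := by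
          rw [ENNReal.add_div, mul_div_assoc, ENNReal.div_self (hd0 ξ hξ) (hdt ξ), mul_one]
  constructor
  · -- the limit condition for q₂
    rw [ENNReal.tendsto_nhds_top_iff_nnreal]
    intro a
    have ha : (a : ℝ≥0∞) + C < ∞ :=
      ENNReal.add_lt_top.mpr ⟨ENNReal.coe_lt_top, hCne.lt_top⟩
    have hev : ∀ᶠ ξ : ℝ in 𝓝[≠] (0 : ℝ),
        (a : ℝ≥0∞) + C < (⨅ x, oneDimSymbol c₁ ν₁ x ξ) / ENNReal.ofReal (ξ ^ 2) :=
      hlim₁.eventually (lt_mem_nhds ha)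
    filter_upwards [hev, self_mem_nhdsWithin] with ξ h1 h2
    have hξ : ξ ≠ 0 := h2
    have := lt_of_lt_of_le h1 (hinfdiv ξ hξ)
    exact (ENNReal.add_lt_add_iff_right hCne).mp this
  · -- the Chung–Fuchs integral condition for q₂
    obtain ⟨r, hr, hint⟩ := hCF₁
    have h2C : (2 : ℝ≥0∞) * C < ∞ :=
      ENNReal.mul_lt_top (by norm_num) hCne.lt_top
    have hev : ∀ᶠ ξ : ℝ in 𝓝[≠] (0 : ℝ),
        (2 : ℝ≥0∞) * C < (⨅ x, oneDimSymbol c₁ ν₁ x ξ) / ENNReal.ofReal (ξ ^ 2) :=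
      hlim₁.eventually (lt_mem_nhds h2C)
    rw [eventually_iff, Metric.mem_nhdsWithin_iff] at hev
    obtain ⟨ε, hε, hball⟩ := hev
    set r' : ℝ := min r ε with hr'def
    have hr' : 0 < r' := lt_min hr hε
    -- pointwise comparison of the integrands on the small ball
    have claim : ∀ ξ : ℝ, ξ ∈ Metric.ball (0 : ℝ) r' → ξ ≠ 0 →
        (⨅ x, oneDimSymbol c₂ ν₂ x ξ)⁻¹ ≤ 2 * (⨅ x, oneDimSymbol c₁ ν₁ x ξ)⁻¹ := by
      intro ξ hmem hξ
      set q₁ : ℝ≥0∞ := ⨅ x, oneDimSymbol c₁ ν₁ x ξ with hq₁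
      set q₂ : ℝ≥0∞ := ⨅ x, oneDimSymbol c₂ ν₂ x ξ with hq₂
      set d : ℝ≥0∞ := ENNReal.ofReal (ξ ^ 2) with hd
      have hdiv : (2 : ℝ≥0∞) * C < q₁ / d := by
        apply hball
        constructor
        · exact Metric.ball_subset_ball (min_le_right r ε) hmem
        · exact hξ
      have hq₁lb : 2 * C * d < q₁ :=
        (ENNReal.lt_div_iff_mul_lt (Or.inl (hd0 ξ hξ)) (Or.inl (hdt ξ))).mp hdiv
      have hCd : C * d ≠ ∞ := ENNReal.mul_ne_top hCne (hdt ξ)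
      rcases eq_or_ne q₂ ∞ with hq₂top | hq₂top
      · simp [hq₂top]
      have h1 : q₁ ≤ q₂ + C * d := hinf ξ
      have hq₁top : q₁ ≠ ∞ :=
        (lt_of_le_of_lt h1 (ENNReal.add_lt_top.mpr ⟨hq₂top.lt_top, hCd.lt_top⟩)).ne
      have h2q₂ : (2 : ℝ≥0∞) * q₂ ≠ ∞ := ENNReal.mul_ne_top (by norm_num) hq₂top
      have hlt : q₁ + q₁ < 2 * q₂ + q₁ := by
        calc q₁ + q₁ ≤ (q₂ + C * d) + (q₂ + C * d) := add_le_add h1 h1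
          _ = 2 * q₂ + 2 * C * d := by ring
          _ < 2 * q₂ + q₁ := ENNReal.add_lt_add_left h2q₂ hq₁lb
      have hq₁le : q₁ ≤ 2 * q₂ := ((ENNReal.add_lt_add_iff_right hq₁top).mp hlt).le
      have hdivle : q₁ / 2 ≤ q₂ := ENNReal.div_le_of_le_mul (by rwa [mul_comm] at hq₁le)
      have hinvle : q₂⁻¹ ≤ (q₁ / 2)⁻¹ := ENNReal.inv_le_inv.mpr hdivle
      calc q₂⁻¹ ≤ (q₁ / 2)⁻¹ := hinvle
        _ = 2 / q₁ := ENNReal.inv_div (Or.inl (by norm_num)) (Or.inl (by norm_num))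
        _ = 2 * q₁⁻¹ := div_eq_mul_inv _ _
    refine ⟨r', hr', ?_⟩
    have hae : ∀ᵐ ξ ∂(volume.restrict (Metric.ball (0 : ℝ) r')),
        (⨅ x, oneDimSymbol c₂ ν₂ x ξ)⁻¹ ≤ 2 * (⨅ x, oneDimSymbol c₁ ν₁ x ξ)⁻¹ := by
      have hne : ∀ᵐ ξ : ℝ ∂(volume.restrict (Metric.ball (0 : ℝ) r')), ξ ≠ 0 := by
        refine ae_restrict_of_ae ?_
        rw [ae_iff]
        simp only [ne_eq, not_not, Set.setOf_eq_eq_singleton]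
        exact Real.volume_singleton
      filter_upwards [hne, ae_restrict_mem Metric.isOpen_ball.measurableSet] with ξ h1 h2
      exact claim ξ h2 h1
    calc (∫⁻ ξ in Metric.ball (0 : ℝ) r', (⨅ x, oneDimSymbol c₂ ν₂ x ξ)⁻¹)
        ≤ ∫⁻ ξ in Metric.ball (0 : ℝ) r', 2 * (⨅ x, oneDimSymbol c₁ ν₁ x ξ)⁻¹ :=
          lintegral_mono_ae hae
      _ = 2 * ∫⁻ ξ in Metric.ball (0 : ℝ) r', (⨅ x, oneDimSymbol c₁ ν₁ x ξ)⁻¹ :=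
          lintegral_const_mul' _ _ (by norm_num)
      _ ≤ 2 * ∫⁻ ξ in Metric.ball (0 : ℝ) r, (⨅ x, oneDimSymbol c₁ ν₁ x ξ)⁻¹ :=
          mul_le_mul_right (lintegral_mono_set (Metric.ball_subset_ball (min_le_left r ε))) _
      _ < ∞ := ENNReal.mul_lt_top (by norm_num) hint
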